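/- Under the hypotheses of the GMOPCGM trust-region lemma (s = αp_{k-1}, v = y + τs with ‖y‖ ≤ Lγ‖s‖, yᵀs ≥ 0, λ ∈ [α_min, α_max]), the direction p_k = -M G_k + θ p_{k-1} with M = λ + θ(G_kᵀp_{k-1})/‖G_k‖² satisfies ‖p_k‖ ≤ (α_max + 2(1+α_max)(Lγ+τ)/τ)·‖G_k‖. -/

import Mathlib

open RealInnerProductSpace

theorem stmt_16 (n : ℕ) (Gk p' s y v : EuclideanSpace ℝ (Fin n))
    (hGk : Gk ≠ 0) (hp' : p' ≠ 0) (hs : s ≠ 0)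
    (τ L γ α : ℝ) (hτ : 0 < τ) (hL : 0 < L) (hγ : 0 < γ) (hα : 0 < α)
    (hsα : s = α • p') (hybound : ‖y‖ ≤ L * γ * ‖s‖) (hys : 0 ≤ ⟪y, s⟫)
    (hv : v = y + τ • s)
    (αmin αmax lam : ℝ) (hαmin : 0 < αmin) (hαminmax : αmin ≤ αmax)
    (hlam1 : αmin ≤ lam) (hlam2 : lam ≤ αmax)
    (tstar θ M : ℝ) (htstar : tstar = lam * ⟪s, v⟫ / ‖s‖ ^ 2)
    (hθ : θ = ⟪v - tstar • s, Gk⟫ / ⟪p', v⟫)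
    (hM : M = lam + θ * ⟪Gk, p'⟫ / ‖Gk‖ ^ 2)
    (pk : EuclideanSpace ℝ (Fin n)) (hpk : pk = -(M • Gk) + θ • p') :
    ‖pk‖ ≤ (αmax + 2 * (1 + αmax) * (L * γ + τ) / τ) * ‖Gk‖ := by
  have hGn : (0:ℝ) < ‖Gk‖ := norm_pos_iff.mpr hGk
  have hpn : (0:ℝ) < ‖p'‖ := norm_pos_iff.mpr hp'
  have hsn : (0:ℝ) < ‖s‖ := norm_pos_iff.mpr hs
  have hlamp : 0 < lam := lt_of_lt_of_le hαmin hlam1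
  have hsp : ‖s‖ = α * ‖p'‖ := by
    rw [hsα, norm_smul, Real.norm_eq_abs, abs_of_pos hα]
  have hsy : (0:ℝ) ≤ ⟪s, y⟫ := by rwa [real_inner_comm]
  have hsv : ⟪s, v⟫ = ⟪s, y⟫ + τ * ‖s‖ ^ 2 := by
    rw [hv, inner_add_right, real_inner_smul_right, real_inner_self_eq_norm_sq]
  have hsvlb : τ * ‖s‖ ^ 2 ≤ ⟪s, v⟫ := by nlinarith
  have hsvpos : 0 < ⟪s, v⟫ := lt_of_lt_of_le (by positivity) hsvlb
  have hvn : ‖v‖ ≤ (L * γ + τ) * ‖s‖ := by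
    rw [hv]
    calc ‖y + τ • s‖ ≤ ‖y‖ + ‖τ • s‖ := norm_add_le _ _
      _ ≤ L * γ * ‖s‖ + τ * ‖s‖ := by
          rw [norm_smul, Real.norm_eq_abs, abs_of_pos hτ]; linarith
      _ = (L * γ + τ) * ‖s‖ := by ring
  have hpv : ⟪p', v⟫ = ⟪s, v⟫ / α := by
    rw [hsα, real_inner_smul_left]; field_simp
  have hpvlb : τ * ‖s‖ * ‖p'‖ ≤ ⟪p', v⟫ := by
    rw [hpv, le_div_iff₀ hα]
    nlinarith [hsvlb]
  have hpvpos : 0 < ⟪p', v⟫ := lt_of_lt_of_le (by positivity) hpvlb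
  have htnn : 0 ≤ tstar := by
    rw [htstar]; positivity
  have hsvub : ⟪s, v⟫ ≤ (L * γ + τ) * ‖s‖ ^ 2 := by
    calc ⟪s, v⟫ ≤ ‖s‖ * ‖v‖ := real_inner_le_norm s v
      _ ≤ ‖s‖ * ((L * γ + τ) * ‖s‖) := mul_le_mul_of_nonneg_left hvn hsn.le
      _ = (L * γ + τ) * ‖s‖ ^ 2 := by ring
  have htub : tstar ≤ αmax * (L * γ + τ) := by
    rw [htstar, div_le_iff₀ (by positivity : (0:ℝ) < ‖s‖ ^ 2)]
    calc lam * ⟪s, v⟫ ≤ αmax * ⟪s, v⟫ :=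
          mul_le_mul_of_nonneg_right hlam2 hsvpos.le
      _ ≤ αmax * ((L * γ + τ) * ‖s‖ ^ 2) :=
          mul_le_mul_of_nonneg_left hsvub (by linarith)
      _ = αmax * (L * γ + τ) * ‖s‖ ^ 2 := by ring
  have hvt : ‖v - tstar • s‖ ≤ (1 + αmax) * (L * γ + τ) * ‖s‖ := by
    calc ‖v - tstar • s‖ ≤ ‖v‖ + ‖tstar • s‖ := norm_sub_le _ _
      _ ≤ (L * γ + τ) * ‖s‖ + αmax * (L * γ + τ) * ‖s‖ := by
          rw [norm_smul, Real.norm_eq_abs, abs_of_nonneg htnn]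
          have := mul_le_mul_of_nonneg_right htub (le_of_lt hsn)
          linarith
      _ = (1 + αmax) * (L * γ + τ) * ‖s‖ := by ring
  set C : ℝ := (1 + αmax) * (L * γ + τ) with hC
  have hαmaxpos : 0 < αmax := lt_of_lt_of_le hαmin hαminmax
  have hCpos : 0 < C := by rw [hC]; positivity
  have hθb : |θ| ≤ C * ‖Gk‖ / (τ * ‖p'‖) := by
    rw [hθ, abs_div, abs_of_pos hpvpos, div_le_div_iff₀ hpvpos (by positivity)]
    have h1 : |⟪v - tstar • s, Gk⟫| ≤ C * ‖s‖ * ‖Gk‖ := by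
      calc |⟪v - tstar • s, Gk⟫| ≤ ‖v - tstar • s‖ * ‖Gk‖ := abs_real_inner_le_norm _ _
        _ ≤ C * ‖s‖ * ‖Gk‖ := by
            apply mul_le_mul_of_nonneg_right _ (le_of_lt hGn)
            linarith [hvt]
    calc |⟪v - tstar • s, Gk⟫| * (τ * ‖p'‖)
        ≤ C * ‖s‖ * ‖Gk‖ * (τ * ‖p'‖) :=
          mul_le_mul_of_nonneg_right h1 (by positivity)
      _ = C * ‖Gk‖ * (τ * ‖s‖ * ‖p'‖) := by ring
      _ ≤ C * ‖Gk‖ * ⟪p', v⟫ :=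
          mul_le_mul_of_nonneg_left hpvlb (mul_nonneg hCpos.le hGn.le)
  have hθp : |θ| * ‖p'‖ ≤ C / τ * ‖Gk‖ := by
    have := mul_le_mul_of_nonneg_right hθb (le_of_lt hpn)
    calc |θ| * ‖p'‖ ≤ C * ‖Gk‖ / (τ * ‖p'‖) * ‖p'‖ := this
      _ = C / τ * ‖Gk‖ := by field_simp
  have hMabs : |M| ≤ lam + |θ| * ‖p'‖ / ‖Gk‖ := by
    rw [hM]
    calc |lam + θ * ⟪Gk, p'⟫ / ‖Gk‖ ^ 2|
        ≤ |lam| + |θ * ⟪Gk, p'⟫ / ‖Gk‖ ^ 2| := abs_add_le _ _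
      _ ≤ lam + |θ| * ‖p'‖ / ‖Gk‖ := by
          rw [abs_of_pos hlamp, abs_div, abs_mul, abs_of_pos (by positivity : (0:ℝ) < ‖Gk‖ ^ 2)]
          have h2 : |⟪Gk, p'⟫| ≤ ‖Gk‖ * ‖p'‖ := abs_real_inner_le_norm _ _
          have : |θ| * |⟪Gk, p'⟫| / ‖Gk‖ ^ 2 ≤ |θ| * ‖p'‖ / ‖Gk‖ := by
            rw [div_le_div_iff₀ (by positivity) hGn]
            calc |θ| * |⟪Gk, p'⟫| * ‖Gk‖
                ≤ |θ| * (‖Gk‖ * ‖p'‖) * ‖Gk‖ :=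
                  mul_le_mul_of_nonneg_right
                    (mul_le_mul_of_nonneg_left h2 (abs_nonneg θ)) hGn.le
              _ = |θ| * ‖p'‖ * ‖Gk‖ ^ 2 := by ring
          linarith
  have hpkb : ‖pk‖ ≤ lam * ‖Gk‖ + 2 * (|θ| * ‖p'‖) := by
    rw [hpk]
    calc ‖-(M • Gk) + θ • p'‖ ≤ ‖-(M • Gk)‖ + ‖θ • p'‖ := norm_add_le _ _
      _ = |M| * ‖Gk‖ + |θ| * ‖p'‖ := by
          rw [norm_neg, norm_smul, norm_smul, Real.norm_eq_abs, Real.norm_eq_abs]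
      _ ≤ (lam + |θ| * ‖p'‖ / ‖Gk‖) * ‖Gk‖ + |θ| * ‖p'‖ :=
          add_le_add (mul_le_mul_of_nonneg_right hMabs (le_of_lt hGn)) le_rfl
      _ = lam * ‖Gk‖ + 2 * (|θ| * ‖p'‖) := by field_simp; ring
  have : (αmax + 2 * (1 + αmax) * (L * γ + τ) / τ) * ‖Gk‖
      = αmax * ‖Gk‖ + 2 * (C / τ * ‖Gk‖) := by rw [hC]; ring
  rw [this]
  have hlg : lam * ‖Gk‖ ≤ αmax * ‖Gk‖ := mul_le_mul_of_nonneg_right hlam2 (le_of_lt hGn)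
  linarith [hθp]
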